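/- Let a, b ∈ ℝ and define w(t,x) := a (6bt + 1)^{−1/3} − b x² / (6bt + 1) for x ∈ ℝ and for all t with 6bt + 1 > 0. Then w satisfies the Boussinesq equation ∂_t w = (∂_x w)² + w ∂_xx w, equivalently ∂_t w = (1/2) ∂_xx(w²), on this time domain. -/

import Mathlib

open Real Set

/-- Partial derivative in the first (time) variable. -/
noncomputable def pt (f : ℝ → ℝ → ℝ) (t x : ℝ) : ℝ := deriv (fun s => f s x) t

/-- Partial derivative in the second (space) variable. -/
noncomputable def px (f : ℝ → ℝ → ℝ) (t x : ℝ) : ℝ := deriv (fun y => f t y) x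

/-- The quadratic profile `w(t,x) = a(6bt+1)^{-1/3} − bx²/(6bt+1)` satisfies the
Boussinesq equation `∂ₜw = (∂ₓw)² + w ∂ₓₓw`, equivalently `∂ₜw = (1/2)∂ₓₓ(w²)`,
wherever `6bt + 1 > 0`. -/
theorem stmt_7 (a b : ℝ) (w : ℝ → ℝ → ℝ)
    (hw : w = fun t x => a * (6 * b * t + 1) ^ (-(1/3) : ℝ) - b * x ^ 2 / (6 * b * t + 1)) :
    ∀ t : ℝ, 0 < 6 * b * t + 1 → ∀ x : ℝ,
      pt w t x = (px w t x) ^ 2 + w t x * px (px w) t x ∧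
      pt w t x = (1/2) * px (px (fun s y => (w s y) ^ 2)) t x := by
  subst hw
  intro t ht x
  have hu0 : (6 * b * t + 1) ≠ 0 := ne_of_gt ht
  -- first spatial derivative
  have hA : ∀ y : ℝ,
      HasDerivAt (fun y' : ℝ => a * (6 * b * t + 1) ^ (-(1/3) : ℝ) - b * y' ^ 2 / (6 * b * t + 1))
        (-(2 * b * y / (6 * b * t + 1))) y := by
    intro y
    have h1 : HasDerivAt (fun y' : ℝ => b * y' ^ 2 / (6 * b * t + 1))
        (2 * b * y / (6 * b * t + 1)) y := by
      have := ((hasDerivAt_pow 2 y).const_mul b).div_const (6 * b * t + 1)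
      exact this.congr_deriv (by ring)
    simpa using h1.const_sub (a * (6 * b * t + 1) ^ (-(1/3) : ℝ))
  have key1 : ∀ y : ℝ,
      deriv (fun y' : ℝ => a * (6 * b * t + 1) ^ (-(1/3) : ℝ) - b * y' ^ 2 / (6 * b * t + 1)) y
        = -(2 * b * y / (6 * b * t + 1)) := fun y => (hA y).deriv
  -- second spatial derivative
  have hB : ∀ y : ℝ, HasDerivAt (fun y' : ℝ => -(2 * b * y' / (6 * b * t + 1)))
      (-(2 * b / (6 * b * t + 1))) y := by
    intro y
    have := (((hasDerivAt_id y).const_mul (2 * b)).div_const (6 * b * t + 1)).neg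
    exact this.congr_deriv (by ring)
  have key2 : deriv (fun y : ℝ => -(2 * b * y / (6 * b * t + 1))) x
      = -(2 * b / (6 * b * t + 1)) := (hB x).deriv
  -- time derivative
  have hlin : HasDerivAt (fun s : ℝ => 6 * b * s + 1) (6 * b) t := by
    simpa using ((hasDerivAt_id t).const_mul (6 * b)).add_const 1
  have hrpow : HasDerivAt (fun s : ℝ => (6 * b * s + 1) ^ (-(1/3) : ℝ))
      ((-(1/3) : ℝ) * (6 * b * t + 1) ^ ((-(1/3) : ℝ) - 1) * (6 * b)) t := by
    have h := (Real.hasDerivAt_rpow_const (x := 6 * b * t + 1) (p := (-(1/3) : ℝ))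
      (Or.inl hu0))
    exact h.comp t hlin
  have hdiv : HasDerivAt (fun s : ℝ => b * x ^ 2 / (6 * b * s + 1))
      ((0 * (6 * b * t + 1) - b * x ^ 2 * (6 * b)) / (6 * b * t + 1) ^ 2) t :=
    (hasDerivAt_const t (b * x ^ 2)).div hlin hu0
  have key3 : deriv (fun s : ℝ => a * (6 * b * s + 1) ^ (-(1/3) : ℝ)
      - b * x ^ 2 / (6 * b * s + 1)) t
      = a * ((-(1/3) : ℝ) * (6 * b * t + 1) ^ ((-(1/3) : ℝ) - 1) * (6 * b))
        - (0 * (6 * b * t + 1) - b * x ^ 2 * (6 * b)) / (6 * b * t + 1) ^ 2 :=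
    ((hrpow.const_mul a).sub hdiv).deriv
  -- derivatives of w²
  have key4 : ∀ y : ℝ,
      deriv (fun y' : ℝ =>
        (a * (6 * b * t + 1) ^ (-(1/3) : ℝ) - b * y' ^ 2 / (6 * b * t + 1)) ^ 2) y
      = 2 * (a * (6 * b * t + 1) ^ (-(1/3) : ℝ) - b * y ^ 2 / (6 * b * t + 1))
          * (-(2 * b * y / (6 * b * t + 1))) := by
    intro y
    have := ((hA y).pow 2).deriv
    simp only [Pi.pow_def] at this
    simpa using this
  have key5 : deriv (fun y : ℝ =>
      2 * (a * (6 * b * t + 1) ^ (-(1/3) : ℝ) - b * y ^ 2 / (6 * b * t + 1))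
        * (-(2 * b * y / (6 * b * t + 1)))) x
      = 2 * ((-(2 * b * x / (6 * b * t + 1))) * (-(2 * b * x / (6 * b * t + 1)))
          + (a * (6 * b * t + 1) ^ (-(1/3) : ℝ) - b * x ^ 2 / (6 * b * t + 1))
            * (-(2 * b / (6 * b * t + 1)))) := by
    have h := (((hA x).const_mul 2).mul (hB x)).deriv
    simp only [Pi.mul_def] at h
    rw [h]
    ring
  -- rpow algebra
  have hpow : (6 * b * t + 1) ^ ((-(1/3) : ℝ) - 1)
      = (6 * b * t + 1) ^ (-(1/3) : ℝ) / (6 * b * t + 1) := by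
    rw [Real.rpow_sub ht, Real.rpow_one]
  constructor
  · simp only [pt, px, key1, key2, key3, hpow]
    field_simp
    ring
  · simp only [pt, px, key4, key5, key1, key2, key3, hpow]
    field_simp
    ring
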